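/- arXiv:2403.02539 — 5 statements merged into one kernel-verified Lean document; each statement's English description precedes it below -/
import Mathlib

section
/- Let (Ω, 𝓕, ℙ) be a probability space, let A and B be events with p := ℙ(B) ∈ (0,1), set F := ℙ[A | B], γ ∈ ℝ and d := 1 − F + F·exp(γ). Then E[ 1_B·1_A·(1 + ((1−p)/p)·exp(γ)/d²) − 1_B·((1−p)/p)·F·exp(γ)/d² + 1_{Bᶜ}·F·exp(γ)/d ] = p·F + (1−p)·F·exp(γ)/d. (This is the statement that the uncensored-data influence function φ_t = φ_{t1} + φ_{t2} + φ_{t3} has mean ψ_t within a covariate stratum.) -/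
open MeasureTheory Real

/-- Conditional probability `ℙ[E | D] = ℙ(E ∩ D) / ℙ(D)` (as a real number). -/
noncomputable def condProb {Ω : Type*} [MeasurableSpace Ω] (μ : Measure Ω) (E D : Set Ω) : ℝ :=
  (μ (E ∩ D)).toReal / (μ D).toReal

/-- The uncensored-data influence function `φ_t = φ_{t1} + φ_{t2} + φ_{t3}` has mean
`ψ_t = p·F + (1−p)·F·eᵞ/d` within a covariate stratum, where `p = ℙ(B)`,
`F = ℙ[A|B]` and `d = 1 − F + F·eᵞ`. -/
theorem stmt_2 {Ω : Type*} [MeasurableSpace Ω] (μ : Measure Ω) [IsProbabilityMeasure μ]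
    (A B : Set Ω) (hA : MeasurableSet A) (hB : MeasurableSet B) (γ : ℝ)
    (hp : (μ B).toReal ∈ Set.Ioo (0:ℝ) 1) :
    ∫ ω, (B.indicator (fun _ => (1:ℝ)) ω * A.indicator (fun _ => (1:ℝ)) ω *
            (1 + ((1 - (μ B).toReal) / (μ B).toReal) * Real.exp γ /
              (1 - condProb μ A B + condProb μ A B * Real.exp γ) ^ 2)
        - B.indicator (fun _ => (1:ℝ)) ω * ((1 - (μ B).toReal) / (μ B).toReal) *
            condProb μ A B * Real.exp γ /
              (1 - condProb μ A B + condProb μ A B * Real.exp γ) ^ 2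
        + Bᶜ.indicator (fun _ => (1:ℝ)) ω * condProb μ A B * Real.exp γ /
            (1 - condProb μ A B + condProb μ A B * Real.exp γ)) ∂μ
      = (μ B).toReal * condProb μ A B +
          (1 - (μ B).toReal) * condProb μ A B * Real.exp γ /
            (1 - condProb μ A B + condProb μ A B * Real.exp γ) := by
  obtain ⟨hp0, hp1⟩ := hp
  set p : ℝ := (μ B).toReal with hpdef
  set F : ℝ := condProb μ A B with hFdef
  set d : ℝ := 1 - F + F * Real.exp γ with hddef
  set c1 : ℝ := 1 + ((1 - p) / p) * Real.exp γ / d ^ 2 with hc1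
  set c2 : ℝ := ((1 - p) / p) * F * Real.exp γ / d ^ 2 with hc2
  set c3 : ℝ := F * Real.exp γ / d with hc3
  have hfun : (fun ω => B.indicator (fun _ => (1:ℝ)) ω * A.indicator (fun _ => (1:ℝ)) ω * c1
        - B.indicator (fun _ => (1:ℝ)) ω * ((1 - p) / p) * F * Real.exp γ / d ^ 2
        + Bᶜ.indicator (fun _ => (1:ℝ)) ω * F * Real.exp γ / d)
      = fun ω => ((A ∩ B).indicator (fun _ => c1) ω - B.indicator (fun _ => c2) ω)
          + Bᶜ.indicator (fun _ => c3) ω := by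
    funext ω
    by_cases hAω : ω ∈ A <;> by_cases hBω : ω ∈ B <;>
      simp [Set.indicator, hAω, hBω, Set.mem_inter_iff, hc2, hc3] <;> ring
  rw [hfun]
  have iAB : Integrable ((A ∩ B).indicator (fun _ => c1)) μ :=
    (integrable_const c1).indicator (hA.inter hB)
  have iB : Integrable (B.indicator (fun _ => c2)) μ := (integrable_const c2).indicator hB
  have iBc : Integrable (Bᶜ.indicator (fun _ => c3)) μ := (integrable_const c3).indicator hB.compl
  have iSub : Integrable (fun ω => (A ∩ B).indicator (fun _ => c1) ω
      - B.indicator (fun _ => c2) ω) μ := iAB.sub iB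
  rw [integral_add iSub iBc, integral_sub iAB iB,
    integral_indicator_const c1 (hA.inter hB), integral_indicator_const c2 hB,
    integral_indicator_const c3 hB.compl]
  have hABne : (μ (A ∩ B)).toReal = F * p := by
    rw [hFdef, condProb, ← hpdef, div_mul_cancel₀ _ (ne_of_gt hp0)]
  have hBc : (μ Bᶜ).toReal = 1 - p := by
    rw [prob_compl_eq_one_sub hB, ENNReal.toReal_sub_of_le prob_le_one (by simp)]
    simp [hpdef]
  simp only [measureReal_def]
  rw [← hpdef, hABne, hBc]
  simp only [smul_eq_mul, hc1, hc2, hc3]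
  field_simp
  ring
end

section
/- Let Y and C be independent random variables with values in [0,∞) on a probability space (Ω, 𝓕, ℙ), with atomless laws (so in particular ℙ[Y = C] = 0), let G(u) = ℙ[C ≥ u], let s > 0, and let G* : [0,∞) → ℝ be measurable with ε ≤ G*(u) ≤ 1 on [0,s] for some ε > 0. With Ỹ = min(Y,C) and Δ = 1{Y ≤ C}, E[ (Δ + (1−Δ)·1{Ỹ ≥ s}) / G*(min(Ỹ,s)) ] = E[ 1{Y ≤ s}·G(Y)/G*(Y) + 1{Y > s}·G(s)/G*(s) ]. (This is Lemma 1 of the paper in its per-stratum form: the inverse-weighted at-risk indicator with an arbitrary, possibly misspecified, weight function G* has the stated uncensored-data representation.) -/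
open MeasureTheory ProbabilityTheory Real

/-- Lemma 1 of the paper in per-stratum form: with `Ỹ = min(Y,C)`, `Δ = 1{Y ≤ C}`,
true censoring survival `G(u) = ℙ[C ≥ u]`, and any candidate weight `G*` bounded
away from 0 on `[0,s]`,
`E[(Δ + (1−Δ)·1{Ỹ ≥ s})/G*(min(Ỹ,s))] = E[1{Y ≤ s}·G(Y)/G*(Y) + 1{Y > s}·G(s)/G*(s)]`. -/
theorem stmt_5 {Ω : Type*} [MeasurableSpace Ω] (μ : Measure Ω) [IsProbabilityMeasure μ]
    (Y C : Ω → ℝ) (hY : Measurable Y) (hC : Measurable C)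
    (hYnn : ∀ ω, 0 ≤ Y ω) (hCnn : ∀ ω, 0 ≤ C ω)
    (hindep : IndepFun Y C μ)
    (hYatom : NoAtoms (μ.map Y)) (hCatom : NoAtoms (μ.map C))
    (s : ℝ) (hs : 0 < s)
    (Gstar : ℝ → ℝ) (hGstar : Measurable Gstar)
    (ε : ℝ) (hε : 0 < ε) (hGbd : ∀ u ∈ Set.Icc (0:ℝ) s, ε ≤ Gstar u ∧ Gstar u ≤ 1)
    (G : ℝ → ℝ) (hG : ∀ u, G u = (μ {ω | u ≤ C ω}).toReal) :
    ∫ ω, ((if Y ω ≤ C ω then (1:ℝ) else 0)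
          + (1 - if Y ω ≤ C ω then (1:ℝ) else 0) * (if s ≤ min (Y ω) (C ω) then (1:ℝ) else 0))
        / Gstar (min (min (Y ω) (C ω)) s) ∂μ
      = ∫ ω, ((if Y ω ≤ s then (1:ℝ) else 0) * G (Y ω) / Gstar (Y ω)
          + (if s < Y ω then (1:ℝ) else 0) * G s / Gstar s) ∂μ := by
  set μY := μ.map Y with hμY
  set μC := μ.map C with hμC
  have hPY : IsProbabilityMeasure μY := Measure.isProbabilityMeasure_map hY.aemeasurable
  have hPC : IsProbabilityMeasure μC := Measure.isProbabilityMeasure_map hC.aemeasurable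
  -- the joint law is the product of the marginals
  have hprod : μ.map (fun ω => (Y ω, C ω)) = μY.prod μC :=
    (indepFun_iff_map_prod_eq_prod_map_map hY.aemeasurable hC.aemeasurable).mp hindep
  -- G in terms of μC
  have hGeq : ∀ t, G t = (μC (Set.Ici t)).toReal := by
    intro t
    rw [hG t, hμC, Measure.map_apply hC measurableSet_Ici]
    rfl
  have hGanti : Antitone G := by
    intro a b hab
    rw [hGeq a, hGeq b]
    exact ENNReal.toReal_mono (measure_ne_top _ _)
      (measure_mono (Set.Ici_subset_Ici.mpr hab))
  have hGmeas : Measurable G := hGanti.measurable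
  -- the two integrands
  set F : ℝ × ℝ → ℝ := fun p =>
    ((if p.1 ≤ p.2 then (1:ℝ) else 0)
      + (1 - if p.1 ≤ p.2 then (1:ℝ) else 0) * (if s ≤ min p.1 p.2 then (1:ℝ) else 0))
      / Gstar (min (min p.1 p.2) s) with hF
  set g : ℝ → ℝ := fun y =>
    (if y ≤ s then (1:ℝ) else 0) * G y / Gstar y
      + (if s < y then (1:ℝ) else 0) * G s / Gstar s with hg
  have hFmeas : Measurable F := by
    apply Measurable.div
    · apply Measurable.add
      · exact Measurable.ite (measurableSet_le measurable_fst measurable_snd)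
          measurable_const measurable_const
      · exact ((measurable_const.sub
          (Measurable.ite (measurableSet_le measurable_fst measurable_snd)
            measurable_const measurable_const))).mul
          (Measurable.ite
            (measurableSet_le measurable_const (measurable_fst.min measurable_snd))
            measurable_const measurable_const)
    · exact hGstar.comp ((measurable_fst.min measurable_snd).min measurable_const)
  have hgmeas : Measurable g := by
    apply Measurable.add
    · exact ((Measurable.ite (measurableSet_le measurable_id measurable_const)
        measurable_const measurable_const).mul hGmeas).div hGstar
    · exact ((Measurable.ite (measurableSet_lt measurable_const measurable_id)
        measurable_const measurable_const).mul measurable_const).div measurable_const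
  -- integrability of F on the product
  have hYnull : μY (Set.Iio 0) = 0 := by
    rw [hμY, Measure.map_apply hY measurableSet_Iio]
    have : Y ⁻¹' Set.Iio 0 = ∅ := by
      ext ω; simp only [Set.mem_preimage, Set.mem_Iio, Set.mem_empty_iff_false, iff_false,
        not_lt]
      exact hYnn ω
    rw [this, measure_empty]
  have hCnull : μC (Set.Iio 0) = 0 := by
    rw [hμC, Measure.map_apply hC measurableSet_Iio]
    have : C ⁻¹' Set.Iio 0 = ∅ := by
      ext ω; simp only [Set.mem_preimage, Set.mem_Iio, Set.mem_empty_iff_false, iff_false,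
        not_lt]
      exact hCnn ω
    rw [this, measure_empty]
  have hae : ∀ᵐ p ∂(μY.prod μC), 0 ≤ p.1 ∧ 0 ≤ p.2 := by
    rw [ae_iff]
    have hsub : {p : ℝ × ℝ | ¬(0 ≤ p.1 ∧ 0 ≤ p.2)}
        ⊆ (Set.Iio 0 ×ˢ Set.univ) ∪ (Set.univ ×ˢ Set.Iio 0) := by
      intro p hp
      simp only [Set.mem_setOf_eq, not_and_or, not_le] at hp
      rcases hp with h | h
      · exact Or.inl ⟨h, Set.mem_univ _⟩
      · exact Or.inr ⟨Set.mem_univ _, h⟩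
    refine measure_mono_null hsub (measure_union_null ?_ ?_)
    · rw [Measure.prod_prod, hYnull, zero_mul]
    · rw [Measure.prod_prod, hCnull, mul_zero]
  have hFbdd : ∀ᵐ p ∂(μY.prod μC), ‖F p‖ ≤ 1 / ε := by
    filter_upwards [hae] with p hp
    obtain ⟨hy, hc⟩ := hp
    have ht0 : 0 ≤ min (min p.1 p.2) s := le_min (le_min hy hc) hs.le
    have hts : min (min p.1 p.2) s ≤ s := min_le_right _ _
    obtain ⟨hεle, hle1⟩ := hGbd _ ⟨ht0, hts⟩
    have hnum : (0:ℝ) ≤ ((if p.1 ≤ p.2 then (1:ℝ) else 0)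
        + (1 - if p.1 ≤ p.2 then (1:ℝ) else 0) * (if s ≤ min p.1 p.2 then (1:ℝ) else 0)) ∧
        ((if p.1 ≤ p.2 then (1:ℝ) else 0)
        + (1 - if p.1 ≤ p.2 then (1:ℝ) else 0) * (if s ≤ min p.1 p.2 then (1:ℝ) else 0)) ≤ 1 := by
      constructor <;> (split_ifs <;> norm_num)
    rw [hF]
    rw [Real.norm_eq_abs, abs_of_nonneg (div_nonneg hnum.1 (hε.le.trans hεle))]
    exact div_le_div₀ (by norm_num) hnum.2 hε hεle
  have hFint : Integrable F (μY.prod μC) :=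
    Integrable.mono' (integrable_const (1 / ε)) hFmeas.aestronglyMeasurable hFbdd
  -- rewrite LHS as an integral over the product measure
  have hLHS : (∫ ω, F (Y ω, C ω) ∂μ) = ∫ p, F p ∂(μY.prod μC) := by
    rw [← hprod, integral_map (hY.prodMk hC).aemeasurable hFmeas.aestronglyMeasurable]
  -- compute the inner integral
  have hinner : ∀ y : ℝ, (∫ c, F (y, c) ∂μC) = g y := by
    intro y
    have hrep : ∀ c : ℝ, F (y, c)
        = (Set.Ici y).indicator (fun _ => 1 / Gstar (min y s)) c
          + (Set.Ico s y).indicator (fun _ => 1 / Gstar s) c := by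
      intro c
      rw [hF]
      by_cases h1 : y ≤ c
      · have hmin : min y c = y := min_eq_left h1
        have hnotmem : c ∉ Set.Ico s y := fun hmem => absurd hmem.2 (not_lt.mpr h1)
        simp [h1, hmin, Set.indicator_of_mem (Set.mem_Ici.mpr h1),
          Set.indicator_of_notMem hnotmem]
      · have hcy : c < y := lt_of_not_ge h1
        have hmin : min y c = c := min_eq_right hcy.le
        have hnotmem : c ∉ Set.Ici y := fun hmem => absurd hcy (not_lt.mpr hmem)
        by_cases h2 : s ≤ c
        · have hmin2 : min c s = s := min_eq_right h2
          simp [h1, hmin, hmin2, h2, Set.indicator_of_notMem hnotmem,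
            Set.indicator_of_mem (Set.mem_Ico.mpr ⟨h2, hcy⟩)]
        · have hnotmem2 : c ∉ Set.Ico s y := fun hmem => absurd hmem.1 h2
          simp [h1, hmin, h2, Set.indicator_of_notMem hnotmem,
            Set.indicator_of_notMem hnotmem2]
    have hint1 : Integrable ((Set.Ici y).indicator (fun _ => 1 / Gstar (min y s))) μC :=
      (integrable_const _).indicator measurableSet_Ici
    have hint2 : Integrable ((Set.Ico s y).indicator (fun _ => 1 / Gstar s)) μC :=
      (integrable_const _).indicator measurableSet_Ico
    calc (∫ c, F (y, c) ∂μC)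
        = ∫ c, ((Set.Ici y).indicator (fun _ => 1 / Gstar (min y s)) c
            + (Set.Ico s y).indicator (fun _ => 1 / Gstar s) c) ∂μC := by
          exact integral_congr_ae (Filter.Eventually.of_forall hrep)
      _ = (μC (Set.Ici y)).toReal * (1 / Gstar (min y s))
            + (μC (Set.Ico s y)).toReal * (1 / Gstar s) := by
          rw [integral_add hint1 hint2, integral_indicator_const _ measurableSet_Ici,
            integral_indicator_const _ measurableSet_Ico, smul_eq_mul, smul_eq_mul]
          rfl
      _ = g y := by
          rw [hg]
          by_cases hy : y ≤ s
          · have hmin : min y s = y := min_eq_left hy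
            have hempty : Set.Ico s y = ∅ := Set.Ico_eq_empty (fun h => absurd h (not_lt.mpr hy))
            rw [hmin, hempty, measure_empty]
            simp only [hy, if_true, not_lt.mpr hy, if_neg (not_lt.mpr hy)]
            rw [hGeq y]
            simp
            ring
          · have hsy : s < y := lt_of_not_ge hy
            have hmin : min y s = s := min_eq_right hsy.le
            have hunion : Set.Ico s y ∪ Set.Ici y = Set.Ici s :=
              Set.Ico_union_Ici_eq_Ici hsy.le
            have hdisj : Disjoint (Set.Ico s y) (Set.Ici y) := by
              rw [Set.disjoint_left]
              intro c hc1 hc2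
              exact absurd hc1.2 (not_lt.mpr hc2)
            have hmeasadd : μC (Set.Ico s y) + μC (Set.Ici y) = μC (Set.Ici s) := by
              rw [← measure_union hdisj measurableSet_Ici, hunion]
            have htoReal : (μC (Set.Ico s y)).toReal + (μC (Set.Ici y)).toReal
                = (μC (Set.Ici s)).toReal := by
              rw [← ENNReal.toReal_add (measure_ne_top _ _) (measure_ne_top _ _), hmeasadd]
            rw [hmin]
            simp only [if_neg hy, if_pos hsy]
            rw [hGeq s, ← htoReal]
            ring
  -- rewrite RHS as an integral over μY
  have hRHS : (∫ ω, g (Y ω) ∂μ) = ∫ y, g y ∂μY := by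
    rw [hμY, integral_map hY.aemeasurable hgmeas.aestronglyMeasurable]
  calc (∫ ω, F (Y ω, C ω) ∂μ)
      = ∫ p, F p ∂(μY.prod μC) := hLHS
    _ = ∫ y, ∫ c, F (y, c) ∂μC ∂μY := integral_prod F hFint
    _ = ∫ y, g y ∂μY := by
        exact integral_congr_ae (Filter.Eventually.of_forall hinner)
    _ = ∫ ω, g (Y ω) ∂μ := hRHS.symm
end

section
/- Let Y and C be independent random variables with values in [0,∞) on a probability space (Ω, 𝓕, ℙ), with atomless laws, and let s > 0. Let G* : [0,∞) → (0,1] be continuously differentiable with G*(0) = 1. With Ỹ = min(Y,C) and Δ = 1{Y ≤ C}, E[ (Δ + (1−Δ)·1{Ỹ ≥ s}) / G*(min(Ỹ,s)) + (1−Δ)·1{Ỹ < s} / G*(Ỹ) + ∫₀^{Ỹ} 1{u < s}·(G*)′(u)/G*(u)² du ] = 1. (This is the identity E[h_t(G*)(Õ)] = 1 from Lemma 2 in its per-stratum form: the normalizing term of the influence-function estimating equation has mean one for ANY candidate censoring survival function G*, where the cumulative hazard associated with G* is Λ*(u) = −log G*(u), so that −dΛ*(u)/G*(u) = (G*)′(u)/G*(u)²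 du.) -/
open MeasureTheory ProbabilityTheory Real

lemma intAux7 (Gstar : ℝ → ℝ) (hGdiff : ContDiffOn ℝ 1 Gstar (Set.Ici 0))
    (hGpos : ∀ u, 0 ≤ u → 0 < Gstar u) (hG0 : Gstar 0 = 1)
    (s : ℝ) (hs : 0 < s) (m : ℝ) (hm : 0 ≤ m) :
    (∫ u in (0:ℝ)..m, (if u < s then derivWithin Gstar (Set.Ici 0) u / (Gstar u) ^ 2 else 0))
      = 1 - (Gstar (min m s))⁻¹ := by
  set f' : ℝ → ℝ := fun u => derivWithin Gstar (Set.Ici 0) u / (Gstar u) ^ 2 with hf'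
  set g : ℝ → ℝ := fun u => if u < s then f' u else 0 with hg
  have contG : ContinuousOn Gstar (Set.Ici 0) := hGdiff.continuousOn
  have contD : ContinuousOn (derivWithin Gstar (Set.Ici 0)) (Set.Ici 0) :=
    hGdiff.continuousOn_derivWithin (uniqueDiffOn_Ici 0) le_rfl
  have contf' : ContinuousOn f' (Set.Ici 0) :=
    contD.div (contG.pow 2) (fun u hu => pow_ne_zero 2 (hGpos u hu).ne')
  have intf' : ∀ a b : ℝ, 0 ≤ a → 0 ≤ b → IntervalIntegrable f' volume a b := by
    intro a b ha hb
    exact (contf'.mono (fun x hx => (le_min ha hb).trans hx.1)).intervalIntegrable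
  have hgind : g = Set.indicator (Set.Iio s) f' := by
    funext u
    by_cases h : u < s <;> simp [hg, Set.indicator, h]
  have intg : ∀ a b : ℝ, 0 ≤ a → 0 ≤ b → IntervalIntegrable g volume a b := by
    intro a b ha hb
    rw [hgind, intervalIntegrable_iff]
    exact (intervalIntegrable_iff.mp (intf' a b ha hb)).indicator measurableSet_Iio
  -- FTC on [0, b] for f'
  have ftc : ∀ b : ℝ, 0 ≤ b → (∫ u in (0:ℝ)..b, f' u) = 1 - (Gstar b)⁻¹ := by
    intro b hb
    have hcont : ContinuousOn (fun u => -(Gstar u)⁻¹) (Set.Icc 0 b) :=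
      ((contG.mono (Set.Icc_subset_Ici_self)).inv₀
        (fun u hu => (hGpos u hu.1).ne')).neg
    have hderiv : ∀ x ∈ Set.Ioo 0 b,
        HasDerivWithinAt (fun u => -(Gstar u)⁻¹) (f' x) (Set.Ioi x) x := by
      intro x hx
      have hx0 : (0:ℝ) ≤ x := hx.1.le
      have hdiff : HasDerivWithinAt Gstar (derivWithin Gstar (Set.Ici 0) x) (Set.Ici 0) x :=
        ((hGdiff.differentiableOn one_ne_zero) x hx0).hasDerivWithinAt
      have h1 := (hdiff.inv (hGpos x hx0).ne').neg
      have h2 : -(-derivWithin Gstar (Set.Ici 0) x / Gstar x ^ 2) = f' x := by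
        simp [hf', neg_div]
      rw [h2] at h1
      exact h1.mono (fun y hy => le_of_lt (lt_of_le_of_lt hx0 hy))
    have hint : IntervalIntegrable f' volume 0 b := intf' 0 b le_rfl hb
    have := intervalIntegral.integral_eq_sub_of_hasDeriv_right_of_le hb hcont hderiv hint
    rw [this, hG0]
    ring
  have hb : 0 ≤ min m s := le_min hm hs.le
  -- Step A: cut the integral at min m s
  have stepA : (∫ u in (0:ℝ)..m, g u) = ∫ u in (0:ℝ)..(min m s), g u := by
    rcases le_or_gt m s with h | h
    · rw [min_eq_left h]
    · rw [min_eq_right h.le]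
      have hsplit := intervalIntegral.integral_add_adjacent_intervals
        (intg 0 s le_rfl hs.le) (intg s m hs.le (hs.le.trans h.le))
      have hzero : (∫ u in s..m, g u) = 0 := by
        have : ∀ u ∈ Set.uIcc s m, g u = 0 := by
          intro u hu
          rw [Set.uIcc_of_le h.le] at hu
          simp [hg, not_lt.2 hu.1]
        rw [intervalIntegral.integral_congr this]
        simp
      rw [← hsplit, hzero, add_zero]
  -- Step B: on [0, min m s], g = f' a.e.
  have stepB : (∫ u in (0:ℝ)..(min m s), g u) = ∫ u in (0:ℝ)..(min m s), f' u := by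
    apply intervalIntegral.integral_congr_ae
    have hns : ∀ᵐ u : ℝ, u ≠ s := by
      have : (volume : Measure ℝ) {s} = 0 := measure_singleton s
      filter_upwards [measure_eq_zero_iff_ae_notMem.mp this] with u hu
      simpa using hu
    filter_upwards [hns] with u hu hmem
    rw [Set.uIoc_of_le hb] at hmem
    have : u < s := lt_of_le_of_ne (hmem.2.trans (min_le_right m s)) hu
    simp [hg, this]
  calc (∫ u in (0:ℝ)..m, g u) = ∫ u in (0:ℝ)..(min m s), f' u := by rw [stepA, stepB]
    _ = 1 - (Gstar (min m s))⁻¹ := ftc _ hb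

/-- `E[h_t(G*)(Õ)] = 1` (Lemma 2, per-stratum form): for ANY candidate censoring
survival function `G*` (continuously differentiable on `[0,∞)`, with values in
`(0,1]` and `G*(0) = 1`), with `Ỹ = min(Y,C)` and `Δ = 1{Y ≤ C}`,
`E[(Δ + (1−Δ)·1{Ỹ ≥ s})/G*(min(Ỹ,s)) + (1−Δ)·1{Ỹ < s}/G*(Ỹ)
   + ∫₀^{Ỹ} 1{u < s}·(G*)′(u)/G*(u)² du] = 1`. -/
theorem stmt_7 {Ω : Type*} [MeasurableSpace Ω] (μ : Measure Ω) [IsProbabilityMeasure μ]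
    (Y C : Ω → ℝ) (hY : Measurable Y) (hC : Measurable C)
    (hYnn : ∀ ω, 0 ≤ Y ω) (hCnn : ∀ ω, 0 ≤ C ω)
    (hindep : IndepFun Y C μ)
    (hYatom : NoAtoms (μ.map Y)) (hCatom : NoAtoms (μ.map C))
    (s : ℝ) (hs : 0 < s)
    (Gstar : ℝ → ℝ) (hGdiff : ContDiffOn ℝ 1 Gstar (Set.Ici 0))
    (hGrange : ∀ u, 0 ≤ u → 0 < Gstar u ∧ Gstar u ≤ 1) (hG0 : Gstar 0 = 1) :
    ∫ ω, ( ((if Y ω ≤ C ω then (1:ℝ) else 0)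
            + (1 - if Y ω ≤ C ω then (1:ℝ) else 0) * (if s ≤ min (Y ω) (C ω) then (1:ℝ) else 0))
          / Gstar (min (min (Y ω) (C ω)) s)
        + (1 - if Y ω ≤ C ω then (1:ℝ) else 0) * (if min (Y ω) (C ω) < s then (1:ℝ) else 0)
          / Gstar (min (Y ω) (C ω))
        + ∫ u in (0:ℝ)..(min (Y ω) (C ω)),
            (if u < s then derivWithin Gstar (Set.Ici 0) u / (Gstar u) ^ 2 else 0) ) ∂μ = 1 := by
  have hGpos : ∀ u, 0 ≤ u → 0 < Gstar u := fun u hu => (hGrange u hu).1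
  have key : ∀ ω : Ω,
      ( ((if Y ω ≤ C ω then (1:ℝ) else 0)
            + (1 - if Y ω ≤ C ω then (1:ℝ) else 0) * (if s ≤ min (Y ω) (C ω) then (1:ℝ) else 0))
          / Gstar (min (min (Y ω) (C ω)) s)
        + (1 - if Y ω ≤ C ω then (1:ℝ) else 0) * (if min (Y ω) (C ω) < s then (1:ℝ) else 0)
          / Gstar (min (Y ω) (C ω))
        + ∫ u in (0:ℝ)..(min (Y ω) (C ω)),
            (if u < s then derivWithin Gstar (Set.Ici 0) u / (Gstar u) ^ 2 else 0) ) = 1 := by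
    intro ω
    set m := min (Y ω) (C ω) with hmdef
    have hm : 0 ≤ m := le_min (hYnn ω) (hCnn ω)
    rw [intAux7 Gstar hGdiff hGpos hG0 s hs m hm]
    by_cases h : Y ω ≤ C ω
    · have hpos := (hGpos (min m s) (le_min hm hs.le)).ne'
      rw [if_pos h]
      field_simp
      ring
    · by_cases h2 : s ≤ m
      · rw [if_neg h, if_pos h2, if_neg (not_lt.2 h2), min_eq_right h2]
        field_simp
        ring
      · rw [if_neg h, if_neg h2, if_pos (not_le.1 h2), min_eq_left (not_le.1 h2).le]
        field_simp
        ring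
  rw [MeasureTheory.integral_congr_ae (g := fun _ : Ω => (1:ℝ)) (Filter.Eventually.of_forall key)]
  simp
end

section
/- Let Y and C be independent random variables with values in [0,∞) on a probability space (Ω, 𝓕, ℙ). Let F(u) = ℙ[Y ≤ u] and G(u) = ℙ[C ≥ u], and assume F and G are continuous, F(s) < 1 and G(s) > 0 for a fixed s > 0. Let G* : [0,∞) → (0,1] be continuously differentiable with G*(0) = 1. With Ỹ = min(Y,C) and Δ = 1{Y ≤ C}, E[ Δ·1{Y ≤ s}/G*(Y) + (1−Δ)·1{Ỹ ≤ s}·((F(s) − F(Ỹ))/(1 − F(Ỹ)))/G*(Ỹ) + ∫₀^{min(Ỹ,s)} ((F(s) − F(u))/(1 − F(u)))·(G*)′(u)/G*(u)² du ] = F(s). (This is the core of Lemma 2 of the paper in per-stratum, single-arm form: the augmented inverse-probability-weighted estimating function for F(s) is unbiased regardless of whether the candidate censoring survival function G* equals the true G, provided the failure distribution F is correct.) -/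
open MeasureTheory ProbabilityTheory Real
open Set

lemma aux_integrable_of_bounded {α : Type*} [MeasurableSpace α] {μ : Measure α}
    [IsFiniteMeasure μ] {f : α → ℝ} (hf : AEStronglyMeasurable f μ) {B : ℝ}
    (h : ∀ᵐ x ∂μ, |f x| ≤ B) : Integrable f μ :=
  ⟨hf, HasFiniteIntegral.of_bounded (C := B) (by simpa [Real.norm_eq_abs] using h)⟩

lemma aux_noatom (ν : Measure ℝ) [IsFiniteMeasure ν]
    (hcont : Continuous fun u => (ν (Iic u)).toReal) (u : ℝ) : ν {u} = 0 := by
  set F : ℝ → ℝ := fun u => (ν (Iic u)).toReal with hFdef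
  have key : ∀ v < u, (ν {u}).toReal ≤ F u - F v := by
    intro v hv
    have hsub : {u} ⊆ Ioc v u := by intro x hx; simp_all [Set.mem_Ioc]
    have h1 : (ν {u}).toReal ≤ (ν (Ioc v u)).toReal :=
      ENNReal.toReal_mono (measure_ne_top _ _) (measure_mono hsub)
    have hunion : Iic v ∪ Ioc v u = Iic u := Set.Iic_union_Ioc_eq_Iic hv.le
    have hdisj : Disjoint (Iic v) (Ioc v u) := by
      rw [Set.disjoint_left]; intro x hx hx'; exact absurd hx'.1 (not_lt.2 hx)
    have h2 : ν (Iic u) = ν (Iic v) + ν (Ioc v u) := by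
      rw [← hunion, measure_union hdisj measurableSet_Ioc]
    have h3 : F u = F v + (ν (Ioc v u)).toReal := by
      simp only [hFdef, h2, ENNReal.toReal_add (measure_ne_top _ _) (measure_ne_top _ _)]
    linarith
  have hle : (ν {u}).toReal ≤ 0 := by
    have ht : Filter.Tendsto (fun n : ℕ => F u - F (u - 1/(n+1))) Filter.atTop (nhds 0) := by
      have : Filter.Tendsto (fun n : ℕ => u - 1/(n+1)) Filter.atTop (nhds u) := by
        have := tendsto_one_div_add_atTop_nhds_zero_nat (𝕜 := ℝ)
        simpa using (tendsto_const_nhds (x := u)).sub this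
      have := (hcont.tendsto u).comp this
      simpa using (tendsto_const_nhds (x := F u)).sub this
    refine ge_of_tendsto ht ?_
    filter_upwards [] with n
    exact key _ (sub_lt_self u (by positivity))
  have : (ν {u}).toReal = 0 := le_antisymm hle ENNReal.toReal_nonneg
  exact (ENNReal.toReal_eq_zero_iff _).1 this |>.resolve_right (measure_ne_top _ _)

lemma aux_ftc (Gstar : ℝ → ℝ) (hGdiff : ContDiffOn ℝ 1 Gstar (Ici 0))
    (hpos : ∀ u, 0 ≤ u → 0 < Gstar u) {t : ℝ} (ht : 0 ≤ t) :
    ∫ u in (0:ℝ)..t, (-(derivWithin Gstar (Ici 0) u) / (Gstar u)^2)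
      = (Gstar t)⁻¹ - (Gstar 0)⁻¹ := by
  apply intervalIntegral.integral_eq_sub_of_hasDeriv_right_of_le ht
  · exact ContinuousOn.inv₀ (hGdiff.continuousOn.mono (Icc_subset_Ici_self))
      (fun x hx => (hpos x hx.1).ne')
  · intro x hx
    have hx0 : (0:ℝ) < x := hx.1
    have hG : HasDerivAt Gstar (derivWithin Gstar (Ici 0) x) x :=
      ((hGdiff.differentiableOn one_ne_zero x (mem_Ici.2 hx0.le)).hasDerivWithinAt).hasDerivAt
        (Ici_mem_nhds hx0)
    exact ((hG.inv (hpos x hx0.le).ne').hasDerivWithinAt)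
  · apply ContinuousOn.intervalIntegrable
    rw [uIcc_of_le ht]
    exact ContinuousOn.div
      ((hGdiff.continuousOn_derivWithin (uniqueDiffOn_Ici 0) le_rfl).mono Icc_subset_Ici_self).neg
      (((hGdiff.continuousOn.mono Icc_subset_Ici_self)).pow 2)
      (fun x hx => pow_ne_zero 2 (hpos x hx.1).ne')

lemma aux_alg (A B D g : ℝ) (h1 : 1 - B ≠ 0) (h2 : g ≠ 0) :
    (1 - B) * ((A - B) / (1 - B) * D / g ^ 2) = (A - B) * (D / g ^ 2) := by
  field_simp

lemma aux_alg2 (A B g : ℝ) (h1 : 1 - B ≠ 0) (h2 : g ≠ 0) :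
    (1 - B) * (1 * ((A - B) / (1 - B)) / g) = (A - B) * g⁻¹ := by
  field_simp

lemma aux_inner (ν : Measure ℝ) [IsProbabilityMeasure ν]
    (F : ℝ → ℝ) (hFd : ∀ u, F u = (ν (Iic u)).toReal) (hFcont : Continuous F)
    (hnull : ν (Iio 0) = 0)
    (s : ℝ) (hs : 0 < s) (hFs : F s < 1)
    (G2 d2 : ℝ → ℝ) (hG2cont : Continuous G2) (hd2cont : Continuous d2)
    (hG2pos : ∀ u, 0 < G2 u)
    (K1 K2 : ℝ) (hK1 : ∀ y, y ≤ s → (G2 y)⁻¹ ≤ K1) (hK11 : 1 ≤ K1)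
    (hK2 : ∀ y, y ≤ s → |d2 y| ≤ K2) (hK20 : 0 ≤ K2)
    (hftc : ∀ t, 0 ≤ t → (∫ u in (0:ℝ)..t, (-(d2 u) / (G2 u)^2)) = (G2 t)⁻¹ - 1)
    (c : ℝ) (hc : 0 ≤ c) :
    ∫ y, ((if y ≤ c then (1:ℝ) else 0) * (if y ≤ s then (1:ℝ) else 0) / G2 y
      + (1 - if y ≤ c then (1:ℝ) else 0) * (if min y c ≤ s then (1:ℝ) else 0)
          * ((F s - F (min y c)) / (1 - F (min y c))) / G2 (min y c)
      + ∫ u in (0:ℝ)..(min (min y c) s),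
          ((F s - F (min u s)) / (1 - F (min u s))) * d2 u / (G2 u)^2) ∂ν
    = F s := by
  -- basic facts about F and ν
  have hFmono : Monotone F := fun a b hab => by
    rw [hFd, hFd]
    exact ENNReal.toReal_mono (measure_ne_top _ _) (measure_mono (Iic_subset_Iic.2 hab))
  have hF0 : ∀ u, 0 ≤ F u := fun u => by rw [hFd]; exact ENNReal.toReal_nonneg
  have hFne : ∀ u, u ≤ s → (0:ℝ) < 1 - F u := fun u hu => by
    have := hFmono hu; linarith
  have hatom : ∀ u, ν {u} = 0 := by
    apply aux_noatom
    have : (fun u => (ν (Iic u)).toReal) = F := funext fun u => (hFd u).symm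
    rw [this]; exact hFcont
  have hIio : ∀ u, (ν (Iio u)).toReal = F u := by
    intro u
    have h2 : ν (Iic u) = ν (Iio u) + ν {u} := by
      rw [← measure_union (by simp [Set.disjoint_left]; intro a ha; exact ne_of_lt ha)
        (measurableSet_singleton u), Set.Iio_union_right]
    rw [hFd, h2, hatom, add_zero]
  have hIci : ∀ u, (ν (Ici u)).toReal = 1 - F u := by
    intro u
    rw [← compl_Iio, prob_compl_eq_one_sub measurableSet_Iio,
      ENNReal.toReal_sub_of_le prob_le_one ENNReal.one_ne_top, ENNReal.toReal_one, hIio]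
  have hIoi : ∀ u, (ν (Ioi u)).toReal = 1 - F u := by
    intro u
    rw [← compl_Iic, prob_compl_eq_one_sub measurableSet_Iic,
      ENNReal.toReal_sub_of_le prob_le_one ENNReal.one_ne_top, ENNReal.toReal_one, ← hFd]
  have hIcc : ∀ u v, u ≤ v → (ν (Icc u v)).toReal = F v - F u := by
    intro u v huv
    have hunion : Iio u ∪ Icc u v = Iic v := by
      ext x; simp only [mem_union, mem_Iio, mem_Icc, mem_Iic]
      constructor
      · rintro (h | ⟨h1, h2⟩); exacts [le_trans h.le huv, h2]
      · intro h; by_cases hx : x < u; exacts [Or.inl hx, Or.inr ⟨not_lt.1 hx, h⟩]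
    have h2 : ν (Iic v) = ν (Iio u) + ν (Icc u v) := by
      rw [← hunion, measure_union ?_ measurableSet_Icc]
      rw [Set.disjoint_left]; intro x hx hx'; exact absurd hx'.1 (not_le.2 hx)
    have h3 : (ν (Iic v)).toReal = (ν (Iio u)).toReal + (ν (Icc u v)).toReal := by
      rw [h2, ENNReal.toReal_add (measure_ne_top _ _) (measure_ne_top _ _)]
    rw [← hFd] at h3; rw [hIio] at h3; linarith
  have hae : ∀ᵐ y ∂ν, 0 ≤ y := by
    rw [ae_iff]
    have : {y : ℝ | ¬ 0 ≤ y} = Iio 0 := by ext y; simp [not_le]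
    rw [this]; exact hnull
  set m := min c s with hm
  have hm0 : (0:ℝ) ≤ m := le_min hc hs.le
  have hms : m ≤ s := min_le_right _ _
  -- the integrand pieces
  have hψcont : Continuous (fun u => ((F s - F (min u s)) / (1 - F (min u s))) * d2 u / (G2 u)^2) := by
    have hmin : Continuous fun u : ℝ => min u s := continuous_id.min continuous_const
    have hden : ∀ u : ℝ, (1 : ℝ) - F (min u s) ≠ 0 := fun u => (hFne _ (min_le_right _ _)).ne'
    exact (((continuous_const.sub (hFcont.comp hmin)).div
      (continuous_const.sub (hFcont.comp hmin)) hden).mul hd2cont).div (hG2cont.pow 2)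
      (fun u => pow_ne_zero 2 (hG2pos u).ne')
  have hlbound : ∀ u : ℝ, |(F s - F (min u s)) / (1 - F (min u s))| ≤ 1 := by
    intro u
    have h1 : 0 < 1 - F (min u s) := hFne _ (min_le_right _ _)
    have h2 : F (min u s) ≤ F s := hFmono (min_le_right _ _)
    rw [abs_div, abs_of_nonneg (by linarith : (0:ℝ) ≤ F s - F (min u s)), abs_of_pos h1,
      div_le_one h1]
    linarith
  have hGinv : ∀ u, u ≤ s → ((G2 u)^2)⁻¹ ≤ K1^2 := by
    intro u hu
    rw [← inv_pow]
    exact pow_le_pow_left₀ (inv_nonneg.2 (hG2pos u).le) (hK1 u hu) 2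
  have hKK : (0:ℝ) ≤ K2 * K1^2 := mul_nonneg hK20 (sq_nonneg _)
  have hψbound : ∀ u, u ≤ s →
      |((F s - F (min u s)) / (1 - F (min u s))) * d2 u / (G2 u)^2| ≤ K2 * K1^2 := by
    intro u hu
    rw [div_eq_mul_inv, abs_mul, abs_mul, abs_inv, abs_of_pos (pow_pos (hG2pos u) 2)]
    calc |(F s - F (min u s)) / (1 - F (min u s))| * |d2 u| * ((G2 u)^2)⁻¹
        ≤ 1 * K2 * K1^2 := by
          gcongr
          · exact hlbound u
          · exact hK2 u hu
          · exact hGinv u hu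
      _ = K2 * K1^2 := by ring
  have hd'bound : ∀ u, u ≤ s → |-(d2 u) / (G2 u)^2| ≤ K2 * K1^2 := by
    intro u hu
    rw [div_eq_mul_inv, abs_mul, abs_neg, abs_inv, abs_of_pos (pow_pos (hG2pos u) 2)]
    gcongr
    · exact hK2 u hu
    · exact hGinv u hu
  -- finite restricted measure and a.e. facts on the product
  haveI hfin : IsFiniteMeasure (volume.restrict (Ioc 0 m)) :=
    ⟨by rw [Measure.restrict_apply_univ]; exact measure_Ioc_lt_top⟩
  have haeu : ∀ᵐ p : ℝ × ℝ ∂(ν.prod (volume.restrict (Ioc 0 m))), p.2 ∈ Ioc 0 m := by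
    rw [ae_iff]
    have hset : {p : ℝ × ℝ | ¬ p.2 ∈ Ioc 0 m} = univ ×ˢ (Ioc 0 m)ᶜ := by
      ext p; simp
    rw [hset, Measure.prod_prod, Measure.restrict_apply measurableSet_Ioc.compl]
    simp
  set W := fun (y u : ℝ) => if u ≤ y ∧ y ≤ m then -(d2 u)/(G2 u)^2 else 0 with hW
  set V := fun (y u : ℝ) => if u ≤ y then
    ((F s - F (min u s)) / (1 - F (min u s))) * d2 u / (G2 u)^2 else 0 with hV
  have hWmeas : Measurable (Function.uncurry W) := by
    have : Function.uncurry W = fun p : ℝ × ℝ =>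
        if p.2 ≤ p.1 ∧ p.1 ≤ m then -(d2 p.2)/(G2 p.2)^2 else 0 := rfl
    rw [this]
    exact Measurable.ite
      ((measurableSet_le measurable_snd measurable_fst).inter
        (measurableSet_le measurable_fst measurable_const))
      (((hd2cont.neg).div (hG2cont.pow 2)
        (fun u => pow_ne_zero 2 (hG2pos u).ne')).measurable.comp measurable_snd)
      measurable_const
  have hVmeas : Measurable (Function.uncurry V) := by
    have : Function.uncurry V = fun p : ℝ × ℝ => if p.2 ≤ p.1 then
        ((F s - F (min p.2 s)) / (1 - F (min p.2 s))) * d2 p.2 / (G2 p.2)^2 else 0 := rfl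
    rw [this]
    exact Measurable.ite (measurableSet_le measurable_snd measurable_fst)
      (hψcont.measurable.comp measurable_snd) measurable_const
  have hWint : Integrable (Function.uncurry W) (ν.prod (volume.restrict (Ioc 0 m))) := by
    apply aux_integrable_of_bounded hWmeas.aestronglyMeasurable (B := K2 * K1^2)
    filter_upwards [haeu] with p hp
    have : Function.uncurry W p = W p.1 p.2 := rfl
    rw [this, hW]
    by_cases h : p.2 ≤ p.1 ∧ p.1 ≤ m
    · simp only [h, if_true]
      exact hd'bound p.2 (hp.2.trans hms)
    · simp only [h, if_false, abs_zero]; exact hKK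
  have hVint : Integrable (Function.uncurry V) (ν.prod (volume.restrict (Ioc 0 m))) := by
    apply aux_integrable_of_bounded hVmeas.aestronglyMeasurable (B := K2 * K1^2)
    filter_upwards [haeu] with p hp
    have : Function.uncurry V p = V p.1 p.2 := rfl
    rw [this, hV]
    by_cases h : p.2 ≤ p.1
    · simp only [h, if_true]
      exact hψbound p.2 (hp.2.trans hms)
    · simp only [h, if_false, abs_zero]; exact hKK
  -- rewrite the integrand
  have hrw : (fun y => (if y ≤ c then (1:ℝ) else 0) * (if y ≤ s then (1:ℝ) else 0) / G2 y
      + (1 - if y ≤ c then (1:ℝ) else 0) * (if min y c ≤ s then (1:ℝ) else 0)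
          * ((F s - F (min y c)) / (1 - F (min y c))) / G2 (min y c)
      + ∫ u in (0:ℝ)..(min (min y c) s),
          ((F s - F (min u s)) / (1 - F (min u s))) * d2 u / (G2 u)^2)
      = (fun y => (Iic m).indicator (fun y' => (G2 y')⁻¹) y
      + (Ioi c).indicator
          (fun _ => (if c ≤ s then (1:ℝ) else 0) * ((F s - F c) / (1 - F c)) / G2 c) y
      + ∫ u in (0:ℝ)..(min (min y c) s),
          ((F s - F (min u s)) / (1 - F (min u s))) * d2 u / (G2 u)^2) := by
    funext y
    congr 1
    congr 1
    · by_cases h1 : y ≤ c <;> by_cases h2 : y ≤ s <;>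
        simp [indicator_apply, mem_Iic, hm, le_min_iff, h1, h2, div_eq_mul_inv]
    · by_cases hyc : y ≤ c
      · simp [indicator_apply, mem_Ioi, not_lt.2 hyc, hyc]
      · have hmc : min y c = c := min_eq_right (le_of_lt (not_le.1 hyc))
        simp [indicator_apply, mem_Ioi, not_le.1 hyc, hyc, hmc]
  rw [hrw]
  -- integrability of the three pieces
  have hint1 : Integrable ((Iic m).indicator (fun y' => (G2 y')⁻¹)) ν := by
    apply aux_integrable_of_bounded
      ((hG2cont.measurable.inv.indicator measurableSet_Iic).aestronglyMeasurable) (B := K1)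
    filter_upwards [] with y
    by_cases hym : y ≤ m
    · rw [indicator_of_mem (mem_Iic.2 hym), Pi.inv_apply, abs_of_pos (inv_pos.2 (hG2pos y))]
      exact hK1 y (hym.trans hms)
    · rw [indicator_of_notMem (by simpa [mem_Iic] using hym), abs_zero]
      linarith
  have hint2 : Integrable ((Ioi c).indicator
      (fun _ : ℝ => (if c ≤ s then (1:ℝ) else 0) * ((F s - F c) / (1 - F c)) / G2 c)) ν :=
    (integrable_const _).indicator measurableSet_Ioi
  have hint3 : Integrable (fun y => ∫ u in (0:ℝ)..(min (min y c) s),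
      ((F s - F (min u s)) / (1 - F (min u s))) * d2 u / (G2 u)^2) ν := by
    apply aux_integrable_of_bounded
      (((intervalIntegral.continuous_primitive
          (fun a b => hψcont.intervalIntegrable a b) 0).comp
        ((continuous_id.min continuous_const).min continuous_const)).aestronglyMeasurable)
      (B := K2 * K1^2 * s)
    filter_upwards [hae] with y hy
    have ht0 : (0:ℝ) ≤ min (min y c) s := le_min (le_min hy hc) hs.le
    have hts : min (min y c) s ≤ s := min_le_right _ _
    have h1 : |∫ u in (0:ℝ)..(min (min y c) s),
        ((F s - F (min u s)) / (1 - F (min u s))) * d2 u / (G2 u)^2|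
        ≤ K2 * K1^2 * |min (min y c) s - 0| := by
      rw [← Real.norm_eq_abs]
      apply intervalIntegral.norm_integral_le_of_norm_le_const
      intro u hu
      rw [Set.uIoc_of_le ht0] at hu
      rw [Real.norm_eq_abs]
      exact hψbound u (hu.2.trans hts)
    calc |∫ u in (0:ℝ)..(min (min y c) s),
        ((F s - F (min u s)) / (1 - F (min u s))) * d2 u / (G2 u)^2|
        ≤ K2 * K1^2 * |min (min y c) s - 0| := h1
      _ ≤ K2 * K1^2 * s := by
          rw [sub_zero, abs_of_nonneg ht0]
          exact mul_le_mul_of_nonneg_left hts hKK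
  have hint12 : Integrable (fun y => (Iic m).indicator (fun y' => (G2 y')⁻¹) y
      + (Ioi c).indicator
          (fun _ => (if c ≤ s then (1:ℝ) else 0) * ((F s - F c) / (1 - F c)) / G2 c) y) ν :=
    hint1.add hint2
  rw [integral_add hint12 hint3, integral_add hint1 hint2]
  -- Term 1
  have hT1 : ∫ y, (Iic m).indicator (fun y' => (G2 y')⁻¹) y ∂ν
      = F m + ∫ u in Ioc 0 m, (F m - F u) * (-(d2 u)/(G2 u)^2) := by
    have step1 : ∀ᵐ y ∂ν, (Iic m).indicator (fun y' => (G2 y')⁻¹) y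
        = (Iic m).indicator (fun _ => (1:ℝ)) y + ∫ u in Ioc 0 m, W y u := by
      filter_upwards [hae] with y hy
      by_cases hym : y ≤ m
      · have hρ : ∫ u in Ioc 0 m, W y u = ∫ u in Ioc 0 y, -(d2 u)/(G2 u)^2 := by
          have e1 : ∫ u in Ioc 0 m, W y u
              = ∫ u in Ioc 0 m, (Iic y).indicator (fun u => -(d2 u)/(G2 u)^2) u := by
            apply setIntegral_congr_fun measurableSet_Ioc
            intro u _
            simp [hW, indicator_apply, mem_Iic, hym]
          have e2 : Ioc 0 m ∩ Iic y = Ioc 0 y := by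
            ext u
            simp only [mem_inter_iff, mem_Ioc, mem_Iic]
            constructor
            · rintro ⟨⟨a, _⟩, d⟩; exact ⟨a, d⟩
            · rintro ⟨a, d⟩; exact ⟨⟨a, d.trans hym⟩, d⟩
          rw [e1, setIntegral_indicator measurableSet_Iic, e2]
        rw [hρ, ← intervalIntegral.integral_of_le hy, hftc y hy]
        simp only [indicator_of_mem (mem_Iic.2 hym)]
        ring
      · have hρ : ∫ u in Ioc 0 m, W y u = 0 := by
          have : ∀ u ∈ Ioc 0 m, W y u = 0 := fun u _ => by
            simp [hW, hym]
          rw [setIntegral_congr_fun measurableSet_Ioc this, integral_zero]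
        rw [indicator_of_notMem (by simpa [mem_Iic] using hym),
          indicator_of_notMem (by simpa [mem_Iic] using hym), hρ, add_zero]
    have hρint : Integrable (fun y => ∫ u in Ioc 0 m, W y u) ν := hWint.integral_prod_left
    have hindint : Integrable (fun y => (Iic m).indicator (fun _ => (1:ℝ)) y) ν :=
      (integrable_const (1:ℝ)).indicator measurableSet_Iic
    rw [integral_congr_ae step1, integral_add hindint hρint,
      integral_indicator_const _ measurableSet_Iic, integral_integral_swap hWint]
    have hswap2 : ∫ u in Ioc 0 m, (∫ y, W y u ∂ν)
        = ∫ u in Ioc 0 m, (F m - F u) * (-(d2 u)/(G2 u)^2) := by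
      apply setIntegral_congr_fun measurableSet_Ioc
      intro u hu
      dsimp only
      have e2 : (fun y => W y u) = (Icc u m).indicator (fun _ => -(d2 u)/(G2 u)^2) := by
        funext y; simp [hW, indicator_apply, mem_Icc]
      rw [e2, integral_indicator_const _ measurableSet_Icc, measureReal_def, hIcc u m hu.2, smul_eq_mul]
    rw [hswap2, smul_eq_mul, mul_one, measureReal_def, ← hFd]
  -- Term 2
  have hT2 : ∫ y, (Ioi c).indicator
      (fun _ : ℝ => (if c ≤ s then (1:ℝ) else 0) * ((F s - F c) / (1 - F c)) / G2 c) y ∂ν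
      = (1 - F c) * ((if c ≤ s then (1:ℝ) else 0) * ((F s - F c) / (1 - F c)) / G2 c) := by
    rw [integral_indicator_const _ measurableSet_Ioi, measureReal_def, hIoi, smul_eq_mul]
  -- Term 3
  have hT3 : ∫ y, (∫ u in (0:ℝ)..(min (min y c) s),
      ((F s - F (min u s)) / (1 - F (min u s))) * d2 u / (G2 u)^2) ∂ν
      = ∫ u in Ioc 0 m, (F s - F u) * (d2 u / (G2 u)^2) := by
    have step1 : ∀ᵐ y ∂ν, (∫ u in (0:ℝ)..(min (min y c) s),
        ((F s - F (min u s)) / (1 - F (min u s))) * d2 u / (G2 u)^2)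
        = ∫ u in Ioc 0 m, V y u := by
      filter_upwards [hae] with y hy
      have hmin : min (min y c) s = min y m := by rw [hm, min_assoc]
      have h0 : (0:ℝ) ≤ min y m := le_min hy hm0
      rw [hmin, intervalIntegral.integral_of_le h0]
      have e1 : ∫ u in Ioc 0 m, V y u = ∫ u in Ioc 0 m, (Iic y).indicator
          (fun u => ((F s - F (min u s)) / (1 - F (min u s))) * d2 u / (G2 u)^2) u := by
        apply setIntegral_congr_fun measurableSet_Ioc
        intro u _
        simp [hV, indicator_apply, mem_Iic]
      have e2 : Ioc 0 m ∩ Iic y = Ioc 0 (min y m) := by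
        ext u
        simp only [mem_inter_iff, mem_Ioc, mem_Iic, le_min_iff]
        tauto
      rw [e1, setIntegral_indicator measurableSet_Iic, e2]
    rw [integral_congr_ae step1, integral_integral_swap hVint]
    apply setIntegral_congr_fun measurableSet_Ioc
    intro u hu
    dsimp only
    have hus : u ≤ s := hu.2.trans hms
    have e2 : (fun y => V y u) = (Ici u).indicator
        (fun _ => ((F s - F (min u s)) / (1 - F (min u s))) * d2 u / (G2 u)^2) := by
      funext y; simp [hV, indicator_apply, mem_Ici]
    rw [e2, integral_indicator_const _ measurableSet_Ici, measureReal_def, hIci, smul_eq_mul,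
      min_eq_left hus]
    exact aux_alg (F s) (F u) (d2 u) (G2 u) (hFne u hus).ne' (hG2pos u).ne'
  rw [hT1, hT2, hT3]
  -- combine the two `Ioc` integrals
  have hia : IntegrableOn (fun u => (F m - F u) * (-(d2 u)/(G2 u)^2)) (Ioc 0 m) volume := by
    apply Continuous.integrableOn_Ioc
    exact (continuous_const.sub hFcont).mul
      ((hd2cont.neg).div (hG2cont.pow 2) (fun u => pow_ne_zero 2 (hG2pos u).ne'))
  have hib : IntegrableOn (fun u => (F s - F u) * (d2 u/(G2 u)^2)) (Ioc 0 m) volume := by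
    apply Continuous.integrableOn_Ioc
    exact (continuous_const.sub hFcont).mul
      (hd2cont.div (hG2cont.pow 2) (fun u => pow_ne_zero 2 (hG2pos u).ne'))
  have hcomb : (∫ u in Ioc 0 m, (F m - F u) * (-(d2 u)/(G2 u)^2))
      + (∫ u in Ioc 0 m, (F s - F u) * (d2 u/(G2 u)^2))
      = (F m - F s) * ((G2 m)⁻¹ - 1) := by
    rw [← integral_add hia hib]
    have e3 : (fun u => (F m - F u) * (-(d2 u)/(G2 u)^2) + (F s - F u) * (d2 u/(G2 u)^2))
        = fun u => (F m - F s) * (-(d2 u)/(G2 u)^2) := by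
      funext u; ring
    rw [e3, MeasureTheory.integral_const_mul, ← intervalIntegral.integral_of_le hm0, hftc m hm0]
  by_cases hcs : c ≤ s
  · have hmc : m = c := min_eq_left hcs
    rw [hmc] at hcomb ⊢
    have hne : (1:ℝ) - F c ≠ 0 := (hFne c hcs).ne'
    have hq : (1 - F c) * ((if c ≤ s then (1:ℝ) else 0) * ((F s - F c) / (1 - F c)) / G2 c)
        = (F s - F c) * (G2 c)⁻¹ := by
      rw [if_pos hcs]
      exact aux_alg2 (F s) (F c) (G2 c) hne (hG2pos c).ne'
    rw [hq]
    linear_combination hcomb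
  · have hmc : m = s := min_eq_right (le_of_not_ge hcs)
    rw [hmc] at hcomb ⊢
    rw [if_neg hcs]
    simp only [zero_mul, zero_div, mul_zero]
    linear_combination hcomb


/-- Core of Lemma 2 in per-stratum, single-arm form: the augmented
inverse-probability-weighted estimating function for `F(s)` is unbiased for any
candidate censoring survival function `G*`, provided the failure distribution
`F` is correct:
`E[Δ·1{Y ≤ s}/G*(Y) + (1−Δ)·1{Ỹ ≤ s}·((F(s)−F(Ỹ))/(1−F(Ỹ)))/G*(Ỹ)
   + ∫₀^{min(Ỹ,s)} ((F(s)−F(u))/(1−F(u)))·(G*)′(u)/G*(u)² du] = F(s)`. -/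
theorem stmt_8 {Ω : Type*} [MeasurableSpace Ω] (μ : Measure Ω) [IsProbabilityMeasure μ]
    (Y C : Ω → ℝ) (hY : Measurable Y) (hC : Measurable C)
    (hYnn : ∀ ω, 0 ≤ Y ω) (hCnn : ∀ ω, 0 ≤ C ω)
    (hindep : IndepFun Y C μ)
    (F G : ℝ → ℝ)
    (hF : ∀ u, F u = (μ {ω | Y ω ≤ u}).toReal)
    (hG : ∀ u, G u = (μ {ω | u ≤ C ω}).toReal)
    (hFcont : Continuous F) (hGcont : Continuous G)
    (s : ℝ) (hs : 0 < s) (hFs : F s < 1) (hGs : 0 < G s)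
    (Gstar : ℝ → ℝ) (hGdiff : ContDiffOn ℝ 1 Gstar (Set.Ici 0))
    (hGrange : ∀ u, 0 ≤ u → 0 < Gstar u ∧ Gstar u ≤ 1) (hG0 : Gstar 0 = 1) :
    ∫ ω, ( (if Y ω ≤ C ω then (1:ℝ) else 0) * (if Y ω ≤ s then (1:ℝ) else 0) / Gstar (Y ω)
        + (1 - if Y ω ≤ C ω then (1:ℝ) else 0) * (if min (Y ω) (C ω) ≤ s then (1:ℝ) else 0)
            * ((F s - F (min (Y ω) (C ω))) / (1 - F (min (Y ω) (C ω))))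
            / Gstar (min (Y ω) (C ω))
        + ∫ u in (0:ℝ)..(min (min (Y ω) (C ω)) s),
            ((F s - F u) / (1 - F u)) * derivWithin Gstar (Set.Ici 0) u / (Gstar u) ^ 2 ) ∂μ
      = F s := by
  have hYae : AEMeasurable Y μ := hY.aemeasurable
  have hCae : AEMeasurable C μ := hC.aemeasurable
  set ν := μ.map Y with hνdef
  set κ := μ.map C with hκdef
  haveI : IsProbabilityMeasure ν := Measure.isProbabilityMeasure_map hYae
  haveI : IsProbabilityMeasure κ := Measure.isProbabilityMeasure_map hCae
  have hFν : ∀ u, F u = (ν (Iic u)).toReal := by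
    intro u; rw [hF u, hνdef, Measure.map_apply hY measurableSet_Iic]; rfl
  have hνnull : ν (Iio 0) = 0 := by
    rw [hνdef, Measure.map_apply hY measurableSet_Iio]
    have he : Y ⁻¹' Iio 0 = ∅ := by
      ext ω; simp only [mem_preimage, mem_Iio, mem_empty_iff_false, iff_false, not_lt]
      exact hYnn ω
    simp [he]
  have hκnull : κ (Iio 0) = 0 := by
    rw [hκdef, Measure.map_apply hC measurableSet_Iio]
    have he : C ⁻¹' Iio 0 = ∅ := by
      ext ω; simp only [mem_preimage, mem_Iio, mem_empty_iff_false, iff_false, not_lt]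
      exact hCnn ω
    simp [he]
  -- basic F facts
  have hFmono : Monotone F := fun a b hab => by
    rw [hFν, hFν]
    exact ENNReal.toReal_mono (measure_ne_top _ _) (measure_mono (Iic_subset_Iic.2 hab))
  have hFne : ∀ u, u ≤ s → (0:ℝ) < 1 - F u := fun u hu => by
    have := hFmono hu; linarith
  -- the regularised G2 and d2
  set G2 := fun u : ℝ => Gstar (max u 0) with hG2def
  set d2 := fun u : ℝ => derivWithin Gstar (Set.Ici 0) (max u 0) with hd2def
  have hmaxmem : ∀ u : ℝ, max u 0 ∈ Set.Ici (0:ℝ) := fun u => le_max_right u 0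
  have hmaxc : Continuous fun u : ℝ => max u 0 := continuous_id.max continuous_const
  have hG2cont : Continuous G2 := hGdiff.continuousOn.comp_continuous hmaxc hmaxmem
  have hd2cont : Continuous d2 :=
    (hGdiff.continuousOn_derivWithin (uniqueDiffOn_Ici 0) le_rfl).comp_continuous hmaxc hmaxmem
  have hG2pos : ∀ u, 0 < G2 u := fun u => (hGrange _ (le_max_right u 0)).1
  have hG2eq : ∀ u, 0 ≤ u → G2 u = Gstar u := fun u hu => by
    rw [hG2def]; simp only; rw [max_eq_left hu]
  have hd2eq : ∀ u, 0 ≤ u → d2 u = derivWithin Gstar (Set.Ici 0) u := fun u hu => by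
    rw [hd2def]; simp only; rw [max_eq_left hu]
  have hG2max : ∀ u : ℝ, G2 (max u 0) = G2 u := fun u => by
    rw [hG2def]; simp only; rw [max_eq_left (le_max_right u 0)]
  have hd2max : ∀ u : ℝ, d2 (max u 0) = d2 u := fun u => by
    rw [hd2def]; simp only; rw [max_eq_left (le_max_right u 0)]
  -- bounds K1, K2
  obtain ⟨B1, hB1⟩ := (isCompact_Icc : IsCompact (Icc (0:ℝ) s)).exists_bound_of_continuousOn
    ((hG2cont.inv₀ (fun y => (hG2pos y).ne')).continuousOn :
      ContinuousOn (fun y => (G2 y)⁻¹) (Icc 0 s))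
  obtain ⟨B2, hB2⟩ := (isCompact_Icc : IsCompact (Icc (0:ℝ) s)).exists_bound_of_continuousOn
    (hd2cont.continuousOn : ContinuousOn d2 (Icc 0 s))
  set K1 := max B1 1 with hK1def
  set K2 := max B2 0 with hK2def
  have hK11 : (1:ℝ) ≤ K1 := le_max_right _ _
  have hK20 : (0:ℝ) ≤ K2 := le_max_right _ _
  have hK1 : ∀ y, y ≤ s → (G2 y)⁻¹ ≤ K1 := by
    intro y hy
    have hmem : max y 0 ∈ Icc (0:ℝ) s := ⟨le_max_right _ _, max_le hy hs.le⟩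
    have h1 : (G2 y)⁻¹ = (G2 (max y 0))⁻¹ := by rw [hG2max]
    rw [h1]
    exact le_trans (le_abs_self _) (le_trans (show |(G2 (max y 0))⁻¹| ≤ B1 from by simpa [Real.norm_eq_abs] using hB1 _ hmem)
      (le_max_left _ _))
  have hK2 : ∀ y, y ≤ s → |d2 y| ≤ K2 := by
    intro y hy
    have hmem : max y 0 ∈ Icc (0:ℝ) s := ⟨le_max_right _ _, max_le hy hs.le⟩
    have h1 : d2 y = d2 (max y 0) := (hd2max y).symm
    rw [h1]
    exact le_trans (by simpa only [Real.norm_eq_abs] using hB2 _ hmem) (le_max_left _ _)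
  -- FTC for G2
  have hftc : ∀ t, 0 ≤ t → (∫ u in (0:ℝ)..t, (-(d2 u) / (G2 u)^2)) = (G2 t)⁻¹ - 1 := by
    intro t ht
    have hcongr : EqOn (fun u => -(d2 u) / (G2 u)^2)
        (fun u => -(derivWithin Gstar (Set.Ici 0) u) / (Gstar u)^2) (Set.uIcc 0 t) := by
      intro u hu
      rw [Set.uIcc_of_le ht] at hu
      simp only
      rw [hd2eq u hu.1, hG2eq u hu.1]
    rw [intervalIntegral.integral_congr hcongr,
      aux_ftc Gstar hGdiff (fun u hu => (hGrange u hu).1) ht, hG0, hG2eq t ht]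
    norm_num
  -- continuity of the truncated integrand
  have hψcont : Continuous (fun u => ((F s - F (min u s)) / (1 - F (min u s))) * d2 u / (G2 u)^2) := by
    have hminc : Continuous fun u : ℝ => min u s := continuous_id.min continuous_const
    have hden : ∀ u : ℝ, (1 : ℝ) - F (min u s) ≠ 0 := fun u => (hFne _ (min_le_right _ _)).ne'
    exact (((continuous_const.sub (hFcont.comp hminc)).div
      (continuous_const.sub (hFcont.comp hminc)) hden).mul hd2cont).div (hG2cont.pow 2)
      (fun u => pow_ne_zero 2 (hG2pos u).ne')
  have hlbound : ∀ u : ℝ, u ≤ s → |(F s - F u) / (1 - F u)| ≤ 1 := by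
    intro u hu
    have h1 : 0 < 1 - F u := hFne _ hu
    have h2 : F u ≤ F s := hFmono hu
    rw [abs_div, abs_of_nonneg (by linarith : (0:ℝ) ≤ F s - F u), abs_of_pos h1, div_le_one h1]
    linarith
  have hGinv : ∀ u, u ≤ s → ((G2 u)^2)⁻¹ ≤ K1^2 := by
    intro u hu
    rw [← inv_pow]
    exact pow_le_pow_left₀ (inv_nonneg.2 (hG2pos u).le) (hK1 u hu) 2
  have hKK : (0:ℝ) ≤ K2 * K1 ^ 2 := mul_nonneg hK20 (sq_nonneg _)
  have hψbound : ∀ u, u ≤ s →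
      |((F s - F (min u s)) / (1 - F (min u s))) * d2 u / (G2 u)^2| ≤ K2 * K1^2 := by
    intro u hu
    rw [div_eq_mul_inv, abs_mul, abs_mul, abs_inv, abs_of_pos (pow_pos (hG2pos u) 2)]
    calc |(F s - F (min u s)) / (1 - F (min u s))| * |d2 u| * ((G2 u)^2)⁻¹
        ≤ 1 * K2 * K1^2 := by
          gcongr
          · exact hlbound _ (min_le_right _ _)
          · exact hK2 u hu
          · exact hGinv u hu
      _ = K2 * K1^2 := by ring
  -- the joint law
  have hprod : μ.map (fun ω => (Y ω, C ω)) = ν.prod κ :=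
    (indepFun_iff_map_prod_eq_prod_map_map hYae hCae).mp hindep
  -- the function of the pair
  set Φ : ℝ × ℝ → ℝ := fun p =>
    (if p.1 ≤ p.2 then (1:ℝ) else 0) * (if p.1 ≤ s then (1:ℝ) else 0) / G2 p.1
    + (1 - if p.1 ≤ p.2 then (1:ℝ) else 0) * (if min p.1 p.2 ≤ s then (1:ℝ) else 0)
        * ((F s - F (min p.1 p.2)) / (1 - F (min p.1 p.2))) / G2 (min p.1 p.2)
    + ∫ u in (0:ℝ)..(min (min p.1 p.2) s),
        ((F s - F (min u s)) / (1 - F (min u s))) * d2 u / (G2 u)^2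
    with hΦ
  have hΦmeas : Measurable Φ := by
    rw [hΦ]
    have hminm : Measurable fun p : ℝ × ℝ => min p.1 p.2 := measurable_fst.min measurable_snd
    have hi1 : Measurable fun p : ℝ × ℝ => if p.1 ≤ p.2 then (1:ℝ) else 0 :=
      Measurable.ite (measurableSet_le measurable_fst measurable_snd)
        measurable_const measurable_const
    have hi2 : Measurable fun p : ℝ × ℝ => if p.1 ≤ s then (1:ℝ) else 0 :=
      Measurable.ite (measurableSet_le measurable_fst measurable_const)
        measurable_const measurable_const
    have hi3 : Measurable fun p : ℝ × ℝ => if min p.1 p.2 ≤ s then (1:ℝ) else 0 :=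
      Measurable.ite (measurableSet_le hminm measurable_const)
        measurable_const measurable_const
    refine Measurable.add (Measurable.add ?_ ?_) ?_
    · exact (hi1.mul hi2).div (hG2cont.measurable.comp measurable_fst)
    · exact (((measurable_const.sub hi1).mul hi3).mul
        ((measurable_const.sub (hFcont.measurable.comp hminm)).div
          (measurable_const.sub (hFcont.measurable.comp hminm)))).div
        (hG2cont.measurable.comp hminm)
    · exact ((intervalIntegral.continuous_primitive
        (fun a b => hψcont.intervalIntegrable a b) 0).comp
        ((continuous_fst.min continuous_snd).min continuous_const)).measurable
  -- pointwise identification of the integrand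
  have hptw : ∀ ω, ( (if Y ω ≤ C ω then (1:ℝ) else 0) * (if Y ω ≤ s then (1:ℝ) else 0) / Gstar (Y ω)
        + (1 - if Y ω ≤ C ω then (1:ℝ) else 0) * (if min (Y ω) (C ω) ≤ s then (1:ℝ) else 0)
            * ((F s - F (min (Y ω) (C ω))) / (1 - F (min (Y ω) (C ω))))
            / Gstar (min (Y ω) (C ω))
        + ∫ u in (0:ℝ)..(min (min (Y ω) (C ω)) s),
            ((F s - F u) / (1 - F u)) * derivWithin Gstar (Set.Ici 0) u / (Gstar u) ^ 2 )
      = Φ (Y ω, C ω) := by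
    intro ω
    rw [hΦ]
    simp only
    have hmin0 : 0 ≤ min (Y ω) (C ω) := le_min (hYnn ω) (hCnn ω)
    have ht0 : 0 ≤ min (min (Y ω) (C ω)) s := le_min hmin0 hs.le
    have h1 : Gstar (Y ω) = G2 (Y ω) := (hG2eq _ (hYnn ω)).symm
    have h2 : Gstar (min (Y ω) (C ω)) = G2 (min (Y ω) (C ω)) := (hG2eq _ hmin0).symm
    have h3 : (∫ u in (0:ℝ)..(min (min (Y ω) (C ω)) s),
        ((F s - F u) / (1 - F u)) * derivWithin Gstar (Set.Ici 0) u / (Gstar u) ^ 2)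
        = ∫ u in (0:ℝ)..(min (min (Y ω) (C ω)) s),
        ((F s - F (min u s)) / (1 - F (min u s))) * d2 u / (G2 u)^2 := by
      apply intervalIntegral.integral_congr
      intro u hu
      rw [Set.uIcc_of_le ht0] at hu
      have hu0 : 0 ≤ u := hu.1
      have hus : u ≤ s := hu.2.trans (min_le_right _ _)
      simp only
      rw [hd2eq u hu0, hG2eq u hu0, min_eq_left hus]
    rw [h1, h2, h3]
  -- a.e. positivity on the product measure
  have haep : ∀ᵐ p : ℝ × ℝ ∂(ν.prod κ), 0 ≤ p.1 ∧ 0 ≤ p.2 := by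
    rw [ae_iff]
    have hsub : {p : ℝ × ℝ | ¬(0 ≤ p.1 ∧ 0 ≤ p.2)} ⊆ (Iio 0 ×ˢ univ) ∪ (univ ×ˢ Iio 0) := by
      intro p hp
      simp only [mem_setOf_eq, not_and_or, not_le] at hp
      rcases hp with hp | hp
      · exact Or.inl (by simp [hp])
      · exact Or.inr (by simp [hp])
    refine measure_mono_null hsub (measure_union_null ?_ ?_) <;>
      rw [Measure.prod_prod] <;> simp [hνnull, hκnull]
  -- integrability of Φ
  have hΦint : Integrable Φ (ν.prod κ) := by
    apply aux_integrable_of_bounded hΦmeas.aestronglyMeasurable (B := K1 + K1 + K2 * K1^2 * s)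
    filter_upwards [haep] with p hp
    rw [hΦ]
    simp only
    have hb1 : |(if p.1 ≤ p.2 then (1:ℝ) else 0) * (if p.1 ≤ s then (1:ℝ) else 0) / G2 p.1| ≤ K1 := by
      by_cases h1 : p.1 ≤ p.2 <;> by_cases h2 : p.1 ≤ s <;>
        simp only [h1, h2, if_true, if_false, one_mul, mul_one, zero_mul, mul_zero, zero_div,
          abs_zero, one_div]
      · rw [abs_of_pos (inv_pos.2 (hG2pos p.1))]
        exact hK1 _ h2
      · linarith
      · linarith
      · linarith
    have hb2 : |(1 - if p.1 ≤ p.2 then (1:ℝ) else 0) * (if min p.1 p.2 ≤ s then (1:ℝ) else 0)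
        * ((F s - F (min p.1 p.2)) / (1 - F (min p.1 p.2))) / G2 (min p.1 p.2)| ≤ K1 := by
      by_cases h1 : p.1 ≤ p.2
      · simp only [h1, if_true, sub_self, zero_mul, zero_div, abs_zero]
        linarith
      · by_cases h2 : min p.1 p.2 ≤ s
        · simp only [h1, h2, if_true, if_false, sub_zero, one_mul, mul_one]
          rw [abs_div, abs_of_pos (hG2pos _), div_eq_mul_inv]
          have hmm := mul_le_mul (hlbound _ h2) (hK1 _ h2)
            (inv_nonneg.2 (hG2pos _).le) (by norm_num : (0:ℝ) ≤ 1)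
          simpa using hmm
        · simp only [h1, h2, if_false, mul_zero, zero_mul, zero_div, abs_zero]
          linarith
    have hb3 : |∫ u in (0:ℝ)..(min (min p.1 p.2) s),
        ((F s - F (min u s)) / (1 - F (min u s))) * d2 u / (G2 u)^2| ≤ K2 * K1^2 * s := by
      have ht0 : (0:ℝ) ≤ min (min p.1 p.2) s := le_min (le_min hp.1 hp.2) hs.le
      have hts : min (min p.1 p.2) s ≤ s := min_le_right _ _
      have h1 : |∫ u in (0:ℝ)..(min (min p.1 p.2) s),
          ((F s - F (min u s)) / (1 - F (min u s))) * d2 u / (G2 u)^2|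
          ≤ K2 * K1^2 * |min (min p.1 p.2) s - 0| := by
        rw [← Real.norm_eq_abs (∫ u in (0:ℝ)..(min (min p.1 p.2) s),
          ((F s - F (min u s)) / (1 - F (min u s))) * d2 u / (G2 u)^2)]
        apply intervalIntegral.norm_integral_le_of_norm_le_const
        intro u hu
        rw [Set.uIoc_of_le ht0] at hu
        rw [Real.norm_eq_abs]
        exact hψbound u (hu.2.trans hts)
      refine h1.trans ?_
      rw [sub_zero, abs_of_nonneg ht0]
      exact mul_le_mul_of_nonneg_left hts hKK
    calc |(if p.1 ≤ p.2 then (1:ℝ) else 0) * (if p.1 ≤ s then (1:ℝ) else 0) / G2 p.1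
        + (1 - if p.1 ≤ p.2 then (1:ℝ) else 0) * (if min p.1 p.2 ≤ s then (1:ℝ) else 0)
            * ((F s - F (min p.1 p.2)) / (1 - F (min p.1 p.2))) / G2 (min p.1 p.2)
        + ∫ u in (0:ℝ)..(min (min p.1 p.2) s),
            ((F s - F (min u s)) / (1 - F (min u s))) * d2 u / (G2 u)^2|
        ≤ |(if p.1 ≤ p.2 then (1:ℝ) else 0) * (if p.1 ≤ s then (1:ℝ) else 0) / G2 p.1
        + (1 - if p.1 ≤ p.2 then (1:ℝ) else 0) * (if min p.1 p.2 ≤ s then (1:ℝ) else 0)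
            * ((F s - F (min p.1 p.2)) / (1 - F (min p.1 p.2))) / G2 (min p.1 p.2)|
        + |∫ u in (0:ℝ)..(min (min p.1 p.2) s),
            ((F s - F (min u s)) / (1 - F (min u s))) * d2 u / (G2 u)^2| := abs_add_le _ _
      _ ≤ (K1 + K1) + K2 * K1^2 * s := add_le_add ((abs_add_le _ _).trans (add_le_add hb1 hb2)) hb3
      _ = K1 + K1 + K2 * K1^2 * s := by ring
  -- a.e. positivity of κ
  have hκae : ∀ᵐ c' ∂κ, 0 ≤ c' := by
    rw [ae_iff]
    have he : {c' : ℝ | ¬ 0 ≤ c'} = Iio 0 := by ext x; simp [not_le]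
    rw [he]; exact hκnull
  -- the chain of equalities
  have step1 : (fun ω => ( (if Y ω ≤ C ω then (1:ℝ) else 0) * (if Y ω ≤ s then (1:ℝ) else 0) / Gstar (Y ω)
        + (1 - if Y ω ≤ C ω then (1:ℝ) else 0) * (if min (Y ω) (C ω) ≤ s then (1:ℝ) else 0)
            * ((F s - F (min (Y ω) (C ω))) / (1 - F (min (Y ω) (C ω))))
            / Gstar (min (Y ω) (C ω))
        + ∫ u in (0:ℝ)..(min (min (Y ω) (C ω)) s),
            ((F s - F u) / (1 - F u)) * derivWithin Gstar (Set.Ici 0) u / (Gstar u) ^ 2 ))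
      = fun ω => Φ (Y ω, C ω) := funext hptw
  rw [step1]
  have step2 : ∫ ω, Φ (Y ω, C ω) ∂μ = ∫ p, Φ p ∂(ν.prod κ) := by
    rw [← hprod]
    exact (integral_map ((hY.prodMk hC).aemeasurable) hΦmeas.aestronglyMeasurable).symm
  rw [step2, integral_prod_symm Φ hΦint]
  have step3 : ∫ c', (∫ y, Φ (y, c') ∂ν) ∂κ = ∫ (_ : ℝ), F s ∂κ := by
    apply integral_congr_ae
    filter_upwards [hκae] with c' hc'
    rw [hΦ]
    simp only
    exact aux_inner ν F hFν hFcont hνnull s hs hFs G2 d2 hG2cont hd2cont hG2pos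
      K1 K2 hK1 hK11 hK2 hK20 hftc c' hc'
  rw [step3]
  simp
end

section
/- For every γ ∈ ℝ and all a, b ∈ [0,1], writing d_a = 1 − a + a·exp(γ) and d_b = 1 − b + b·exp(γ) (both positive), the following identity holds: exp(γ)·(b − a)/d_a² + exp(γ)·a/d_a − exp(γ)·b/d_b = exp(γ)·(exp(γ) − 1)·(a − b)² / (d_a²·d_b). (This is the pointwise identity underlying the computation of the second-order bias term H₂ in the proof of Lemma 3: with a = F*_t(s|x) a working value and b = F_t(s|x) the truth, the bias of the influence-function estimating equation under a misspecified outcome model is exactly quadratic in F* − F.) -/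
open Real

/-- Pointwise identity underlying the second-order bias term `H₂` in Lemma 3:
with `d_a = 1 − a + a·eᵞ` and `d_b = 1 − b + b·eᵞ`,
`eᵞ·(b−a)/d_a² + eᵞ·a/d_a − eᵞ·b/d_b = eᵞ·(eᵞ−1)·(a−b)²/(d_a²·d_b)`. -/
theorem stmt_11 (γ a b : ℝ) (ha : a ∈ Set.Icc (0:ℝ) 1) (hb : b ∈ Set.Icc (0:ℝ) 1) :
    Real.exp γ * (b - a) / (1 - a + a * Real.exp γ) ^ 2
      + Real.exp γ * a / (1 - a + a * Real.exp γ)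
      - Real.exp γ * b / (1 - b + b * Real.exp γ)
    = Real.exp γ * (Real.exp γ - 1) * (a - b) ^ 2
        / ((1 - a + a * Real.exp γ) ^ 2 * (1 - b + b * Real.exp γ)) := by
  obtain ⟨ha0, ha1⟩ := ha
  obtain ⟨hb0, hb1⟩ := hb
  have he := Real.exp_pos γ
  have hda : 1 - a + a * Real.exp γ > 0 := by nlinarith [mul_pos (Real.exp_pos γ) (Real.exp_pos γ), mul_nonneg ha0 he.le, mul_nonneg hb0 he.le]
  have hdb : 1 - b + b * Real.exp γ > 0 := by nlinarith [mul_pos (Real.exp_pos γ) (Real.exp_pos γ), mul_nonneg ha0 he.le, mul_nonneg hb0 he.le]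
  rw [div_add_div _ _ (pow_ne_zero 2 hda.ne') hda.ne', div_sub_div _ _ (mul_ne_zero (pow_ne_zero 2 hda.ne') hda.ne') hdb.ne', div_eq_div_iff (mul_ne_zero (mul_ne_zero (pow_ne_zero 2 hda.ne') hda.ne') hdb.ne') (mul_ne_zero (pow_ne_zero 2 hda.ne') hdb.ne')]
  ring
end
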